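/- For every set V ∈ 𝔄⋇𝔅, the function y ↦ P̂_y(V^y) is Q̂-measurable and R_⋇(V) = ∫_Y P̂_y(V^y) dQ̂(y). -/

import Mathlib

open MeasureTheory Set
open scoped symmDiff ENNReal

/-- The σ-ideal `M` of `R`-left nil sets. -/
def leftNil {X Y : Type*} {mX : MeasurableSpace X} [MeasurableSpace Y]
    (Py : Y → @Measure X mX) (Q : Measure Y) : Set (Set (X × Y)) :=
  {E | ∃ N : Set Y, MeasurableSet N ∧ Q N = 0 ∧ ∀ y ∉ N, Py y {x | (x, y) ∈ E} = 0}

lemma aemeas_section {X Y : Type*} [MeasurableSpace X] [MeasurableSpace Y]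
    (Q : Measure Y) (Py : Y → Measure X) [∀ y, IsProbabilityMeasure (Py y)]
    (hPy : ∀ A : Set X, MeasurableSet A → AEMeasurable (fun y => Py y A) Q)
    (W : Set (X × Y)) (hW : MeasurableSet W) :
    AEMeasurable (fun y => Py y {x | (x, y) ∈ W}) Q := by
  refine MeasurableSpace.induction_on_inter
    (C := fun W _ => AEMeasurable (fun y => Py y {x | (x, y) ∈ W}) Q)
    generateFrom_prod.symm isPiSystem_prod ?_ ?_ ?_ ?_ W hW
  · simp only [Set.mem_empty_iff_false, Set.setOf_false, measure_empty]
    exact aemeasurable_const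
  · intro t ht
    obtain ⟨A, hA, B, hB, rfl⟩ := ht
    have : (fun y => Py y {x | (x, y) ∈ A ×ˢ B}) = B.indicator (fun y => Py y A) := by
      funext y
      by_cases hy : y ∈ B
      · simp only [Set.indicator_of_mem hy]
        congr 1
        ext x; simp [hy]
      · simp only [Set.indicator_of_notMem hy]
        have h2 : {x | (x, y) ∈ A ×ˢ B} = (∅ : Set X) := by ext x; simp [hy]
        rw [h2, measure_empty]
    rw [this]
    exact (hPy A hA).indicator hB
  · intro t ht iht
    have : (fun y => Py y {x | (x, y) ∈ tᶜ}) = fun y => 1 - Py y {x | (x, y) ∈ t} := by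
      funext y
      have hsec : MeasurableSet {x | (x, y) ∈ t} := ht.preimage (measurable_prodMk_right)
      have : {x | (x, y) ∈ tᶜ} = {x | (x, y) ∈ t}ᶜ := rfl
      rw [this, prob_compl_eq_one_sub hsec]
    rw [this]
    exact aemeasurable_const.sub iht
  · intro f hdisj hf ihf
    have : (fun y => Py y {x | (x, y) ∈ ⋃ i, f i}) =
        fun y => ∑' i, Py y {x | (x, y) ∈ f i} := by
      funext y
      have : {x | (x, y) ∈ ⋃ i, f i} = ⋃ i, {x | (x, y) ∈ f i} := by ext x; simp
      rw [this, measure_iUnion]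
      · intro i j hij
        have := hdisj hij
        simp only [Function.onFun]
        rw [Set.disjoint_left]
        intro x hxi hxj
        exact Set.disjoint_left.1 this hxi hxj
      · exact fun i => (hf i).preimage measurable_prodMk_right
    rw [this]
    exact AEMeasurable.ennreal_tsum ihf

/-- for every `V = W ∆ N ∈ 𝔄⋇𝔅`, the function `y ↦ P̂_y(V^y)` is
`Q̂`-measurable and `R_⋇(V) = R(W) = ∫_Y P̂_y(V^y) dQ̂(y)`. -/
theorem Rstar_eq_lintegral_sections {X Y : Type*} [MeasurableSpace X] [MeasurableSpace Y]
    (P : Measure X) (Q : Measure Y) [IsProbabilityMeasure P] [IsProbabilityMeasure Q]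
    (Py : Y → Measure X) [∀ y, IsProbabilityMeasure (Py y)]
    (hPy : ∀ A : Set X, MeasurableSet A → AEMeasurable (fun y => Py y A) Q)
    (R : Measure (X × Y)) [IsProbabilityMeasure R]
    (hR : ∀ E : Set (X × Y), MeasurableSet E → R E = ∫⁻ y, Py y {x | (x, y) ∈ E} ∂Q)
    (V W N : Set (X × Y)) (hW : MeasurableSet W) (hN : N ∈ leftNil Py Q)
    (hV : V = W ∆ N) :
    AEMeasurable (fun y => Py y {x | (x, y) ∈ V}) Q ∧
    R W = ∫⁻ y, Py y {x | (x, y) ∈ V} ∂Q := by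
  obtain ⟨N₀, hN₀m, hN₀, hnil⟩ := hN
  have hsec : ∀ y, {x | (x, y) ∈ V} = {x | (x, y) ∈ W} ∆ {x | (x, y) ∈ N} := by
    intro y; ext x; simp [hV, Set.mem_symmDiff]
  have hae : ∀ᵐ y ∂Q, y ∉ N₀ := by
    rw [ae_iff]; simpa using hN₀
  have key : ∀ᵐ y ∂Q, Py y {x | (x, y) ∈ V} = Py y {x | (x, y) ∈ W} := by
    filter_upwards [hae] with y hy
    rw [hsec y]
    have h0 : Py y {x | (x, y) ∈ N} = 0 := hnil y hy
    apply measure_congr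
    rw [MeasureTheory.ae_eq_set]
    constructor
    · refine measure_mono_null ?_ h0
      intro x hx
      rcases hx.1 with h | h
      · exact absurd h.1 hx.2
      · exact h.1
    · refine measure_mono_null ?_ h0
      intro x hx
      by_contra hxn
      exact hx.2 (Or.inl ⟨hx.1, hxn⟩)
  have hWmeas := aemeas_section Q Py hPy W hW
  refine ⟨hWmeas.congr (Filter.EventuallyEq.symm key), ?_⟩
  rw [hR W hW]
  exact (lintegral_congr_ae key).symm
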